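/- arXiv:1404.3068 — 5 statements merged into one kernel-verified Lean document; each statement's English description precedes it below -/
import Mathlib

section
/- Let 1 < p_A, p_B < ∞, let a, b ∈ ℝ^d satisfy αᵀa < β and αᵀb > β, and let ω_a, ω_b > 0. A point x* ∈ ℝ^d with αᵀx* = β minimizes the function x ↦ ω_a‖x − a‖_{p_A} + ω_b‖x − b‖_{p_B} over the hyperplane 𝓗 if and only if: (1) for every index j with α_j = 0, ω_a (|x*_j − a_j| / ‖x* − a‖_{p_A})^{p_A − 1} sgn(x*_j − a_j) + ω_b (|x*_j − b_j| / ‖x* − b‖_{p_B})^{p_B − 1} sgn(x*_j − b_j) = 0; and (2) for all indices i, j with α_i ≠ 0 and α_j ≠ 0, (1/α_i)[ω_a (|x*_i − a_i| / ‖x* − a‖_{p_A})^{p_A − 1} sgn(x*_i − a_i) + ω_b (|x*_i − b_i| / ‖x* − b‖_{p_B})^{p_B − 1} sgn(x*_i − b_i)] = (1/α_j)[ω_a (|x*_j − a_j| / ‖x* − a‖_{p_A})^{p_A − 1} sgn(x*_j − a_j) + ω_b (|x*_j − b_j| / ‖x* − b‖_{p_B})^{p_B − 1} sgn(x*_j −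 b_j)]. -/
open scoped ENNReal BigOperators

open Filter Topology Set

/-- The `ℓ_p` norm on `ℝ^d` for a real exponent `p` (intended for `1 ≤ p < ∞`). -/
noncomputable def lpNormR {d : ℕ} (p : ℝ) (x : Fin d → ℝ) : ℝ :=
  (∑ k, |x k| ^ p) ^ (1 / p)


lemma aux_hasDerivAt_abs_rpow {p : ℝ} (hp : 1 < p) (t : ℝ) :
    HasDerivAt (fun s : ℝ => |s| ^ p) (p * |t| ^ (p - 1) * Real.sign t) t := by
  rcases eq_or_ne t 0 with rfl | ht
  · simp only [Real.sign_zero, mul_zero]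
    rw [hasDerivAt_iff_tendsto_slope]
    have h1 : Tendsto (fun s : ℝ => |s| ^ (p - 1)) (𝓝[≠] (0:ℝ)) (𝓝 0) := by
      have hc : ContinuousAt (fun s : ℝ => |s| ^ (p - 1)) 0 := by
        exact (Real.continuousAt_rpow_const _ _ (Or.inr (by linarith))).comp
          continuous_abs.continuousAt
      have := hc.continuousWithinAt (s := {(0:ℝ)}ᶜ)
      simpa [ContinuousWithinAt, Real.zero_rpow (by linarith : p - 1 ≠ 0)] using this
    apply squeeze_zero_norm' _ h1
    filter_upwards [self_mem_nhdsWithin] with s hs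
    have hs0 : s ≠ 0 := hs
    have habs : |s| ≠ 0 := abs_ne_zero.2 hs0
    have : |slope (fun s : ℝ => |s| ^ p) 0 s| = |s| ^ (p - 1) := by
      have h2 : |s| ^ p = |s| ^ (p - 1) * |s| := by
        rw [← Real.rpow_add_one habs]; ring_nf
      rw [slope_def_field]
      simp only [sub_zero, abs_zero, Real.zero_rpow (by positivity : p ≠ 0)]
      rw [abs_div, abs_of_nonneg (Real.rpow_nonneg (abs_nonneg s) p), h2]
      field_simp
    simpa [Real.norm_eq_abs] using le_of_eq this
  · have h1 : HasDerivAt (fun s : ℝ => |s|) ((SignType.sign t : ℝ)) t := hasDerivAt_abs ht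
    have h2 : HasDerivAt (fun u : ℝ => u ^ p) (p * |t| ^ (p - 1)) |t| :=
      Real.hasDerivAt_rpow_const (Or.inl (abs_ne_zero.2 ht))
    have h3 := h2.comp t h1
    have hsgn : (SignType.sign t : ℝ) = Real.sign t := by
      rcases lt_or_gt_of_ne ht with h | h
      · simp [Real.sign_of_neg h, sign_neg h]
      · simp [Real.sign_of_pos h, sign_pos h]
    rw [← hsgn]
    exact h3

lemma aux_hasDerivAt_lpNormR {d : ℕ} {p : ℝ} (hp : 1 < p) (z v : Fin d → ℝ) (hz : z ≠ 0) :
    HasDerivAt (fun t : ℝ => lpNormR p (fun k => z k + t * v k))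
      (∑ k, (|z k| / lpNormR p z) ^ (p - 1) * Real.sign (z k) * v k) 0 := by
  have hp0 : (0:ℝ) < p := by linarith
  have hS : ∀ k : Fin d, HasDerivAt (fun t : ℝ => |z k + t * v k| ^ p)
      (p * |z k| ^ (p - 1) * Real.sign (z k) * v k) 0 := by
    intro k
    have hin : HasDerivAt (fun t : ℝ => z k + t * v k) (v k) 0 := by
      simpa using ((hasDerivAt_id (0:ℝ)).mul_const (v k)).const_add (z k)
    have h0 : (fun t : ℝ => z k + t * v k) 0 = z k := by simp
    have := (aux_hasDerivAt_abs_rpow hp ((fun t : ℝ => z k + t * v k) 0)).comp 0 hin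
    rw [h0] at this
    exact this
  have hsum : HasDerivAt (fun t : ℝ => ∑ k, |z k + t * v k| ^ p)
      (∑ k, p * |z k| ^ (p - 1) * Real.sign (z k) * v k) 0 :=
    HasDerivAt.fun_sum fun k _ => hS k
  obtain ⟨k0, hk0⟩ : ∃ k, z k ≠ 0 := Function.ne_iff.1 hz
  have hS0 : (0:ℝ) < ∑ k, |z k| ^ p := by
    apply Finset.sum_pos' (fun k _ => Real.rpow_nonneg (abs_nonneg _) p)
    exact ⟨k0, Finset.mem_univ _, Real.rpow_pos_of_pos (abs_pos.2 hk0) p⟩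
  have hfS0 : (∑ k, |z k + 0 * v k| ^ p) = ∑ k, |z k| ^ p := by simp
  have hne : (∑ k, |z k + 0 * v k| ^ p) ≠ 0 := by rw [hfS0]; exact ne_of_gt hS0
  have hrp := hsum.rpow_const (p := 1 / p) (Or.inl hne)
  rw [hfS0] at hrp
  have hfun : (fun t : ℝ => (∑ k, |z k + t * v k| ^ p) ^ (1/p)) =
      (fun t : ℝ => lpNormR p (fun k => z k + t * v k)) := rfl
  rw [hfun] at hrp
  convert hrp using 1
  set S := ∑ k, |z k| ^ p with hSdef
  rw [Finset.sum_mul, Finset.sum_mul]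
  apply Finset.sum_congr rfl
  intro k _
  have hN : lpNormR p z = S ^ (1/p) := rfl
  have hdiv : (|z k| / lpNormR p z) ^ (p - 1) = |z k| ^ (p - 1) / (S ^ (1/p)) ^ (p - 1) := by
    rw [hN, Real.div_rpow (abs_nonneg _) (Real.rpow_nonneg hS0.le _)]
  have hpow : (S ^ (1/p)) ^ (p - 1) = S ^ ((1/p) * (p - 1)) :=
    (Real.rpow_mul hS0.le _ _).symm
  have hinv : S ^ (1/p - 1) = (S ^ ((1/p) * (p - 1)))⁻¹ := by
    rw [← Real.rpow_neg hS0.le]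
    congr 1
    field_simp
    ring
  rw [hdiv, hpow, div_eq_mul_inv, ← hinv]
  field_simp

lemma aux_lpNormR_convexOn {d : ℕ} {p : ℝ} (hp : 1 ≤ p) :
    ConvexOn ℝ Set.univ (fun y : Fin d → ℝ => lpNormR p y) := by
  haveI : Fact (1 ≤ ENNReal.ofReal p) := ⟨by
    rw [ENNReal.one_le_ofReal]; exact hp⟩
  have h := convexOn_univ_norm (E := PiLp (ENNReal.ofReal p) (fun _ : Fin d => ℝ))
  have h2 := h.comp_affineMap
    ((WithLp.linearEquiv (ENNReal.ofReal p) ℝ (∀ _ : Fin d, ℝ)).symm.toLinearMap.toAffineMap)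
  have heq : ((norm : PiLp (ENNReal.ofReal p) (fun _ : Fin d => ℝ) → ℝ) ∘
      (WithLp.linearEquiv (ENNReal.ofReal p) ℝ (∀ _ : Fin d, ℝ)).symm.toLinearMap.toAffineMap) =
      (fun y : Fin d → ℝ => lpNormR p y) := by
    funext y
    have htr : (ENNReal.ofReal p).toReal = p := ENNReal.toReal_ofReal (by linarith)
    simp only [Function.comp]
    rw [PiLp.norm_eq_sum (by rw [htr]; linarith)]
    rw [htr]
    simp [lpNormR, Real.norm_eq_abs]
  rw [heq] at h2
  simpa using h2
lemma aux_convex_min (φ : ℝ → ℝ) (hφ : ConvexOn ℝ Set.univ φ) (hd : HasDerivAt φ 0 0) :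
    φ 0 ≤ φ 1 := by
  have hs : Tendsto (slope φ 0) (𝓝[>] (0:ℝ)) (𝓝 0) :=
    (hasDerivAt_iff_tendsto_slope.1 hd).mono_left
      (nhdsWithin_mono _ (fun t ht => ne_of_gt ht))
  have hev : ∀ᶠ t in 𝓝[>] (0:ℝ), slope φ 0 t ≤ φ 1 - φ 0 := by
    filter_upwards [Ioo_mem_nhdsGT_of_mem (Set.left_mem_Ico.2 one_pos)] with t ht
    have := hφ.secant_mono (a := 0) (Set.mem_univ 0) (Set.mem_univ t) (Set.mem_univ 1)
      (ne_of_gt ht.1) one_ne_zero ht.2.le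
    rw [slope_def_field]
    simpa using this
  have := le_of_tendsto hs hev
  linarith

lemma aux_obj_convex {d : ℕ} {pA pB ωa ωb : ℝ} (hpA : 1 ≤ pA) (hpB : 1 ≤ pB)
    (hωa : 0 ≤ ωa) (hωb : 0 ≤ ωb) (a b : Fin d → ℝ) :
    ConvexOn ℝ Set.univ
      (fun y : Fin d → ℝ => ωa * lpNormR pA (y - a) + ωb * lpNormR pB (y - b)) := by
  have hA : ConvexOn ℝ Set.univ (fun y : Fin d → ℝ => lpNormR pA (y - a)) := by
    have h := (aux_lpNormR_convexOn (d := d) hpA).translate_right (-a)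
    simp only [Set.preimage_univ] at h
    rw [show (fun y : Fin d → ℝ => lpNormR pA (y - a)) = (fun y => lpNormR pA y) ∘ fun z => -a + z by
      funext y
      simp [Function.comp, neg_add_eq_sub]]
    exact h
  have hB : ConvexOn ℝ Set.univ (fun y : Fin d → ℝ => lpNormR pB (y - b)) := by
    have h := (aux_lpNormR_convexOn (d := d) hpB).translate_right (-b)
    simp only [Set.preimage_univ] at h
    rw [show (fun y : Fin d → ℝ => lpNormR pB (y - b)) = (fun y => lpNormR pB y) ∘ fun z => -b + z by
      funext y
      simp [Function.comp, neg_add_eq_sub]]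
    exact h
  have := (hA.smul hωa).add (hB.smul hωb)
  exact this

lemma aux_deriv_obj {d : ℕ} {pA pB : ℝ} (hpA : 1 < pA) (hpB : 1 < pB)
    {ωa ωb : ℝ} (a b x : Fin d → ℝ) (hxa : x - a ≠ 0) (hxb : x - b ≠ 0) (v : Fin d → ℝ) :
    HasDerivAt
      (fun t : ℝ => ωa * lpNormR pA (x + t • v - a) + ωb * lpNormR pB (x + t • v - b))
      (∑ j, (ωa * (|x j - a j| / lpNormR pA (x - a)) ^ (pA - 1) * Real.sign (x j - a j) +
             ωb * (|x j - b j| / lpNormR pB (x - b)) ^ (pB - 1) * Real.sign (x j - b j)) * v j)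
      0 := by
  have hA := (aux_hasDerivAt_lpNormR hpA (x - a) v hxa).const_mul ωa
  have hB := (aux_hasDerivAt_lpNormR hpB (x - b) v hxb).const_mul ωb
  have h := hA.fun_add hB
  have hfun : (fun t : ℝ => ωa * lpNormR pA (fun k => (x - a) k + t * v k) +
      ωb * lpNormR pB (fun k => (x - b) k + t * v k)) =
      (fun t : ℝ => ωa * lpNormR pA (x + t • v - a) + ωb * lpNormR pB (x + t • v - b)) := by
    funext t
    congr 2
    · congr 1; funext k; simp only [Pi.sub_apply, Pi.add_apply, Pi.smul_apply, smul_eq_mul]; ring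
    · congr 1; funext k; simp only [Pi.sub_apply, Pi.add_apply, Pi.smul_apply, smul_eq_mul]; ring
  rw [hfun] at h
  refine h.congr_deriv ?_
  symm
  rw [Finset.mul_sum, Finset.mul_sum, ← Finset.sum_add_distrib]
  apply Finset.sum_congr rfl
  intro k _
  simp only [Pi.sub_apply]
  ring

/-- Lemma 1 (optimality conditions for the gate point of the shortest weighted path
between `a` and `b` separated by the hyperplane `αᵀx = β`, with `1 < p_A, p_B < ∞`). -/
theorem stmt_0 {d : ℕ} (pA pB : ℝ) (hpA : 1 < pA) (hpB : 1 < pB)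
    (α : Fin d → ℝ) (hα : α ≠ 0) (β : ℝ)
    (a b : Fin d → ℝ) (ha : ∑ i, α i * a i < β) (hb : β < ∑ i, α i * b i)
    (ωa ωb : ℝ) (hωa : 0 < ωa) (hωb : 0 < ωb)
    (x : Fin d → ℝ) (hx : ∑ i, α i * x i = β) :
    (∀ y : Fin d → ℝ, ∑ i, α i * y i = β →
        ωa * lpNormR pA (x - a) + ωb * lpNormR pB (x - b) ≤
          ωa * lpNormR pA (y - a) + ωb * lpNormR pB (y - b)) ↔
      ((∀ j, α j = 0 →
          ωa * (|x j - a j| / lpNormR pA (x - a)) ^ (pA - 1) * Real.sign (x j - a j) +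
            ωb * (|x j - b j| / lpNormR pB (x - b)) ^ (pB - 1) * Real.sign (x j - b j) = 0) ∧
        ∀ i j, α i ≠ 0 → α j ≠ 0 →
          (1 / α i) *
              (ωa * (|x i - a i| / lpNormR pA (x - a)) ^ (pA - 1) * Real.sign (x i - a i) +
                ωb * (|x i - b i| / lpNormR pB (x - b)) ^ (pB - 1) * Real.sign (x i - b i)) =
            (1 / α j) *
              (ωa * (|x j - a j| / lpNormR pA (x - a)) ^ (pA - 1) * Real.sign (x j - a j) +
                ωb * (|x j - b j| / lpNormR pB (x - b)) ^ (pB - 1) * Real.sign (x j - b j))) := by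
  have hxa : x - a ≠ 0 := by
    intro h
    rw [sub_eq_zero] at h
    rw [h] at hx
    exact ne_of_lt ha hx
  have hxb : x - b ≠ 0 := by
    intro h
    rw [sub_eq_zero] at h
    rw [h] at hx
    exact ne_of_lt hb hx.symm
  let g : Fin d → ℝ := fun j =>
    ωa * (|x j - a j| / lpNormR pA (x - a)) ^ (pA - 1) * Real.sign (x j - a j) +
      ωb * (|x j - b j| / lpNormR pB (x - b)) ^ (pB - 1) * Real.sign (x j - b j)
  have hderiv : ∀ v : Fin d → ℝ,
      HasDerivAt (fun t : ℝ =>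
          ωa * lpNormR pA (x + t • v - a) + ωb * lpNormR pB (x + t • v - b))
        (∑ j, g j * v j) 0 := fun v => aux_deriv_obj hpA hpB a b x hxa hxb v
  show _ ↔ ((∀ j, α j = 0 → g j = 0) ∧
      ∀ i j, α i ≠ 0 → α j ≠ 0 → (1 / α i) * g i = (1 / α j) * g j)
  constructor
  · intro hmin
    have key : ∀ v : Fin d → ℝ, (∑ i, α i * v i) = 0 → ∑ j, g j * v j = 0 := by
      intro v hv
      have hlin : ∀ t : ℝ, ∑ i, α i * (x + t • v) i = β := by
        intro t
        simp only [Pi.add_apply, Pi.smul_apply, smul_eq_mul]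
        have : (∑ i, α i * (x i + t * v i)) =
            (∑ i, α i * x i) + t * ∑ i, α i * v i := by
          rw [Finset.mul_sum, ← Finset.sum_add_distrib]
          exact Finset.sum_congr rfl fun i _ => by ring
        rw [this, hx, hv]; ring
      have hloc : IsLocalMin (fun t : ℝ =>
          ωa * lpNormR pA (x + t • v - a) + ωb * lpNormR pB (x + t • v - b)) 0 := by
        apply Filter.Eventually.of_forall
        intro t
        have h0 : x + (0:ℝ) • v = x := by simp
        simp only [h0]
        exact hmin _ (hlin t)
      exact hloc.hasDerivAt_eq_zero (hderiv v)
    constructor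
    · intro j hj
      have hv : (∑ i, α i * (fun k => if k = j then (1:ℝ) else 0) i) = 0 := by
        simp [mul_ite, Finset.sum_ite_eq', hj]
      have h := key ((fun k => if k = j then (1:ℝ) else 0)) hv
      simpa [mul_ite, Finset.sum_ite_eq'] using h
    · intro i j hi hj
      have hv : (∑ k, α k * (α i * (fun k => if k = j then (1:ℝ) else 0) k - α j * (if k = i then (1:ℝ) else 0))) = 0 := by
        simp [mul_sub, mul_ite, Finset.sum_sub_distrib, Finset.sum_ite_eq']
        ring
      have h := key _ hv
      simp [mul_sub, mul_ite, Finset.sum_sub_distrib, Finset.sum_ite_eq'] at h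
      field_simp
      linarith
  · rintro ⟨h0, h1⟩
    obtain ⟨i0, hi0⟩ : ∃ i, α i ≠ 0 := Function.ne_iff.1 hα
    have hlam : ∀ j, g j = g i0 / α i0 * α j := by
      intro j
      by_cases hj : α j = 0
      · rw [hj, mul_zero]; exact h0 j hj
      · have h := h1 i0 j hi0 hj
        field_simp at h ⊢
        linarith
    intro y hy
    set v : Fin d → ℝ := y - x with hvdef
    have hsum : ∑ j, g j * v j = 0 := by
      have hterm : ∀ j, g j * v j = g i0 / α i0 * (α j * y j - α j * x j) := by
        intro j
        rw [hlam j, hvdef]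
        simp only [Pi.sub_apply]
        ring
      rw [Finset.sum_congr rfl fun j _ => hterm j, ← Finset.mul_sum,
        Finset.sum_sub_distrib, hx, hy]
      ring
    have hφconv : ConvexOn ℝ Set.univ (fun t : ℝ =>
        ωa * lpNormR pA (x + t • v - a) + ωb * lpNormR pB (x + t • v - b)) := by
      have hF := aux_obj_convex (d := d) hpA.le hpB.le hωa.le hωb.le a b
      have h2 := hF.comp_affineMap (AffineMap.lineMap x y : ℝ →ᵃ[ℝ] (Fin d → ℝ))
      have heq : ((fun z : Fin d → ℝ =>
          ωa * lpNormR pA (z - a) + ωb * lpNormR pB (z - b)) ∘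
          (AffineMap.lineMap x y : ℝ →ᵃ[ℝ] (Fin d → ℝ))) =
          (fun t : ℝ =>
            ωa * lpNormR pA (x + t • v - a) + ωb * lpNormR pB (x + t • v - b)) := by
        funext t
        have hl : (AffineMap.lineMap x y : ℝ →ᵃ[ℝ] (Fin d → ℝ)) t = x + t • v := by
          rw [AffineMap.lineMap_apply, hvdef]
          simp [vsub_eq_sub, vadd_eq_add]
          abel
        simp only [Function.comp, hl]
      rw [heq] at h2
      simpa using h2
    have hd0 : HasDerivAt (fun t : ℝ =>
        ωa * lpNormR pA (x + t • v - a) + ωb * lpNormR pB (x + t • v - b)) 0 0 :=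
      hsum ▸ hderiv v
    have hmin := aux_convex_min _ hφconv hd0
    have e0 : x + (0:ℝ) • v = x := by simp
    have e1 : x + (1:ℝ) • v = y := by rw [hvdef]; simp
    simpa only [e0, e1] using hmin
end

section
/- Define v_A = inf { Σ_{a∈A} ω_a‖x − a‖_{p_A} + Σ_{b∈B} ω_b (‖x − y_b‖_{p_A} + ‖y_b − b‖_{p_B}) : x ∈ ℝ^d with αᵀx ≤ β, and y_b ∈ 𝓗 for all b ∈ B } and v_B = inf { Σ_{b∈B} ω_b‖x − b‖_{p_B} + Σ_{a∈A} ω_a (‖x − y_a‖_{p_B} + ‖y_a − a‖_{p_A}) : x ∈ ℝ^d with αᵀx ≥ β, and y_a ∈ 𝓗 for all a ∈ A }. Then the optimal value of Problem (P) equals min{v_A, v_B}; in particular, if x* is an optimal solution of (P), then x* is the x-component of an optimal solution of the restricted problem achieving this minimum. -/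
open scoped ENNReal BigOperators

/-- The `ℓ_p` norm on `ℝ^d` for `p : ℝ≥0∞` (intended for `1 ≤ p ≤ ∞`). -/
noncomputable def lpNorm {d : ℕ} (p : ℝ≥0∞) (x : Fin d → ℝ) : ℝ :=
  if p = ∞ then ⨆ k, |x k| else (∑ k, |x k| ^ p.toReal) ^ (1 / p.toReal)

/-- The mixed-norm shortest-path distance induced by the hyperplane `αᵀz = β`. -/
noncomputable def mixDist {d : ℕ} (pA pB : ℝ≥0∞) (α : Fin d → ℝ) (β : ℝ)
    (x y : Fin d → ℝ) : ℝ :=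
  if ∑ i, α i * x i ≤ β then
    (if ∑ i, α i * y i ≤ β then lpNorm pA (x - y)
     else ⨅ z : {z : Fin d → ℝ // ∑ i, α i * z i = β},
            lpNorm pA (z.1 - x) + lpNorm pB (z.1 - y))
  else
    (if ∑ i, α i * y i ≤ β then
       ⨅ z : {z : Fin d → ℝ // ∑ i, α i * z i = β},
         lpNorm pA (z.1 - y) + lpNorm pB (z.1 - x)
     else lpNorm pB (x - y))

section AuxLemmas
variable {d : ℕ} {p q : ℝ≥0∞}

lemma lpNorm_nonneg (p : ℝ≥0∞) (x : Fin d → ℝ) : 0 ≤ lpNorm p x := by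
  unfold lpNorm
  split
  · exact Real.iSup_nonneg fun k => abs_nonneg _
  · exact Real.rpow_nonneg (Finset.sum_nonneg fun k _ =>
      Real.rpow_nonneg (abs_nonneg _) _) _

lemma lpNorm_neg (p : ℝ≥0∞) (x : Fin d → ℝ) : lpNorm p (-x) = lpNorm p x := by
  unfold lpNorm
  simp [Pi.neg_apply, abs_neg]

lemma lpNorm_sub_comm (p : ℝ≥0∞) (x y : Fin d → ℝ) :
    lpNorm p (x - y) = lpNorm p (y - x) := by
  rw [← lpNorm_neg p (x - y), neg_sub]

lemma abs_le_lpNorm (hp : 1 ≤ p) (x : Fin d → ℝ) (i : Fin d) :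
    |x i| ≤ lpNorm p x := by
  unfold lpNorm
  split
  · exact le_ciSup (f := fun k => |x k|) (Set.Finite.bddAbove (Set.finite_range _)) i
  · rename_i hp'
    have ht : 1 ≤ p.toReal := by
      rw [← ENNReal.toReal_one]
      exact ENNReal.toReal_mono hp' hp
    have ht0 : 0 < p.toReal := lt_of_lt_of_le one_pos ht
    calc |x i| = (|x i| ^ p.toReal) ^ (1 / p.toReal) := by
          rw [← Real.rpow_mul (abs_nonneg _)]
          rw [mul_one_div, div_self ht0.ne', Real.rpow_one]
      _ ≤ _ := by
          apply Real.rpow_le_rpow (Real.rpow_nonneg (abs_nonneg _) _)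
          · exact Finset.single_le_sum (fun k _ => Real.rpow_nonneg (abs_nonneg _) _)
              (Finset.mem_univ i)
          · positivity

lemma lpNorm_continuous (hp : 1 ≤ p) : Continuous (lpNorm (d := d) p) := by
  unfold lpNorm
  split
  · rcases isEmpty_or_nonempty (Fin d) with h | h
    · simpa using continuous_const
    · have : (fun x : Fin d → ℝ => ⨆ k, |x k|) =
          fun x => Finset.univ.sup' Finset.univ_nonempty (fun k => |x k|) := by
        funext x
        rw [Finset.sup'_univ_eq_ciSup]
      rw [this]
      apply Continuous.finset_sup'_apply
      intro i _
      exact (continuous_apply i).abs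
  · rename_i hp'
    have ht : 1 ≤ p.toReal := by
      rw [← ENNReal.toReal_one]
      exact ENNReal.toReal_mono hp' hp
    have ht0 : 0 < p.toReal := lt_of_lt_of_le one_pos ht
    have hsum : Continuous (fun x : Fin d → ℝ => ∑ k, |x k| ^ p.toReal) := by
      apply continuous_finset_sum
      intro k _
      have h1 : Continuous fun x : Fin d → ℝ => |x k| := (continuous_apply k).abs
      have h2 : Continuous fun t : ℝ => t ^ p.toReal := by
        apply continuous_iff_continuousAt.2
        intro t
        exact Real.continuousAt_rpow_const t _ (Or.inr ht0.le)
      exact h2.comp h1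
    have h3 : Continuous fun t : ℝ => t ^ (1 / p.toReal) := by
      apply continuous_iff_continuousAt.2
      intro t
      exact Real.continuousAt_rpow_const t _ (Or.inr (by positivity))
    exact h3.comp hsum

lemma exists_mem_hyperplane {α : Fin d → ℝ} (hα : α ≠ 0) (β : ℝ) :
    ∃ z : Fin d → ℝ, ∑ i, α i * z i = β := by
  obtain ⟨i, hi⟩ := Function.ne_iff.1 hα
  have hs : 0 < ∑ j, α j ^ 2 := by
    apply Finset.sum_pos' (fun j _ => sq_nonneg _)
    exact ⟨i, Finset.mem_univ i, sq_pos_of_ne_zero hi⟩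
  refine ⟨(β / ∑ j, α j ^ 2) • α, ?_⟩
  have : ∑ j, α j * ((β / ∑ j, α j ^ 2) * α j) = (β / ∑ j, α j ^ 2) * ∑ j, α j ^ 2 := by
    rw [Finset.mul_sum]; congr 1; funext j; ring
  simpa [Pi.smul_apply, smul_eq_mul, this] using div_mul_cancel₀ β hs.ne'

lemma hyperplane_closed (α : Fin d → ℝ) (β : ℝ) :
    IsClosed {z : Fin d → ℝ | ∑ i, α i * z i = β} := by
  apply isClosed_eq _ continuous_const
  exact continuous_finset_sum _ fun i _ => continuous_const.mul (continuous_apply i)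

lemma attain {pA pB : ℝ≥0∞} (hpA : 1 ≤ pA) (hpB : 1 ≤ pB)
    {α : Fin d → ℝ} (hα : α ≠ 0) (β : ℝ) (x b : Fin d → ℝ) :
    ∃ z0 : {z : Fin d → ℝ // ∑ i, α i * z i = β},
      ∀ z : {z : Fin d → ℝ // ∑ i, α i * z i = β},
        lpNorm pA (z0.1 - x) + lpNorm pB (z0.1 - b) ≤
          lpNorm pA (z.1 - x) + lpNorm pB (z.1 - b) := by
  set g : (Fin d → ℝ) → ℝ := fun z => lpNorm pA (z - x) + lpNorm pB (z - b) with hg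
  have hgc : Continuous g :=
    ((lpNorm_continuous hpA).comp (continuous_id.sub continuous_const)).add
      ((lpNorm_continuous hpB).comp (continuous_id.sub continuous_const))
  obtain ⟨z1, hz1⟩ := exists_mem_hyperplane hα β
  set c := g z1 with hc
  have hc0 : 0 ≤ c := add_nonneg (lpNorm_nonneg _ _) (lpNorm_nonneg _ _)
  set S : Set (Fin d → ℝ) := {z | ∑ i, α i * z i = β} ∩ {z | g z ≤ c} with hS
  have hSclosed : IsClosed S :=
    (hyperplane_closed α β).inter (isClosed_le hgc continuous_const)
  have hSbdd : Bornology.IsBounded S := by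
    apply (Metric.isBounded_closedBall (x := x) (r := c)).subset
    rintro z ⟨_, hzc⟩
    rw [Metric.mem_closedBall, dist_eq_norm]
    rw [pi_norm_le_iff_of_nonneg hc0]
    intro i
    calc ‖(z - x) i‖ = |(z - x) i| := rfl
      _ ≤ lpNorm pA (z - x) := abs_le_lpNorm hpA _ i
      _ ≤ g z := le_add_of_nonneg_right (lpNorm_nonneg _ _)
      _ ≤ c := hzc
  have hScpt : IsCompact S := Metric.isCompact_of_isClosed_isBounded hSclosed hSbdd
  have hSne : S.Nonempty := ⟨z1, hz1, le_refl c⟩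
  obtain ⟨z0, hz0S, hz0min⟩ := hScpt.exists_isMinOn hSne hgc.continuousOn
  refine ⟨⟨z0, hz0S.1⟩, fun z => ?_⟩
  by_cases hzc : g z.1 ≤ c
  · exact hz0min ⟨z.2, hzc⟩
  · exact le_trans (hz0min ⟨hz1, le_refl c⟩) (le_of_not_ge hzc)

lemma lpNorm_zero (hp : 1 ≤ p) : lpNorm (d := d) p 0 = 0 := by
  unfold lpNorm
  split
  · simp [Real.iSup_const_zero]
  · rename_i hp'
    have ht : 1 ≤ p.toReal := by
      rw [← ENNReal.toReal_one]; exact ENNReal.toReal_mono hp' hp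
    have ht0 : 0 < p.toReal := lt_of_lt_of_le one_pos ht
    simp [Real.zero_rpow ht0.ne', Real.zero_rpow (inv_ne_zero ht0.ne')]

lemma lpNorm_add_le (hp : 1 ≤ p) (x y : Fin d → ℝ) :
    lpNorm p (x + y) ≤ lpNorm p x + lpNorm p y := by
  unfold lpNorm
  split
  · rcases isEmpty_or_nonempty (Fin d) with h | h
    · simp [Real.iSup_of_isEmpty]
    · apply Real.iSup_le
      · intro k
        calc |(x + y) k| ≤ |x k| + |y k| := abs_add_le _ _
          _ ≤ _ := add_le_add
            (le_ciSup (f := fun k => |x k|) (Set.Finite.bddAbove (Set.finite_range _)) k)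
            (le_ciSup (f := fun k => |y k|) (Set.Finite.bddAbove (Set.finite_range _)) k)
      · exact add_nonneg (Real.iSup_nonneg fun k => abs_nonneg _)
          (Real.iSup_nonneg fun k => abs_nonneg _)
  · rename_i hp'
    have ht : 1 ≤ p.toReal := by
      rw [← ENNReal.toReal_one]; exact ENNReal.toReal_mono hp' hp
    exact Real.Lp_add_le Finset.univ x y ht

lemma lpNorm_anti (hq : 1 ≤ q) (hqp : q ≤ p) (x : Fin d → ℝ) :
    lpNorm p x ≤ lpNorm q x := by
  have hp : 1 ≤ p := hq.trans hqp
  by_cases hptop : p = ∞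
  · by_cases hqtop : q = ∞
    · rw [hptop, hqtop]
    · rw [hptop]
      show (if (⊤:ℝ≥0∞) = ∞ then _ else _) ≤ _
      rw [if_pos rfl]
      rcases isEmpty_or_nonempty (Fin d) with h | h
      · rw [Real.iSup_of_isEmpty]
        exact lpNorm_nonneg q x
      · exact Real.iSup_le (fun k => abs_le_lpNorm hq x k) (lpNorm_nonneg q x)
  · have hqtop : q ≠ ∞ := fun h => hptop (top_le_iff.1 (h ▸ hqp))
    have hs : 1 ≤ p.toReal := by
      rw [← ENNReal.toReal_one]; exact ENNReal.toReal_mono hptop hp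
    have htr : 1 ≤ q.toReal := by
      rw [← ENNReal.toReal_one]; exact ENNReal.toReal_mono hqtop hq
    have hts : q.toReal ≤ p.toReal := ENNReal.toReal_mono hptop hqp
    have hs0 : 0 < p.toReal := lt_of_lt_of_le one_pos hs
    have ht0 : 0 < q.toReal := lt_of_lt_of_le one_pos htr
    set S := lpNorm q x with hS
    have hSn : 0 ≤ S := lpNorm_nonneg q x
    unfold lpNorm
    rw [if_neg hptop]
    by_cases hS0 : S = 0
    · -- all coordinates are zero
      have hx0 : ∀ i, x i = 0 := by
        intro i
        have := abs_le_lpNorm hq x i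
        rw [← hS, hS0] at this
        exact abs_eq_zero.1 (le_antisymm this (abs_nonneg _))
      have : ∀ i : Fin d, |x i| ^ p.toReal = 0 := fun i => by
        rw [hx0 i, abs_zero, Real.zero_rpow hs0.ne']
      rw [Finset.sum_congr rfl fun i _ => this i]
      simp [Real.zero_rpow hs0.ne', Real.zero_rpow (inv_ne_zero hs0.ne'), hS0, hSn]
    · have hSpos : 0 < S := lt_of_le_of_ne hSn (Ne.symm hS0)
      -- key: ∑ |x i|^s ≤ S^s
      have key : ∑ i, |x i| ^ p.toReal ≤ S ^ p.toReal := by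
        have h1 : ∑ i, (|x i| / S) ^ p.toReal ≤ ∑ i, (|x i| / S) ^ q.toReal := by
          apply Finset.sum_le_sum
          intro i _
          by_cases hxi : x i = 0
          · simp [hxi, Real.zero_rpow hs0.ne', Real.zero_rpow ht0.ne']
          · apply Real.rpow_le_rpow_of_exponent_ge
            · exact div_pos (abs_pos.2 hxi) hSpos
            · exact div_le_one_of_le₀ (abs_le_lpNorm hq x i) hSn
            · exact hts
        have h2 : ∑ i, (|x i| / S) ^ q.toReal = 1 := by
          have : ∀ i : Fin d, (|x i| / S) ^ q.toReal = |x i| ^ q.toReal / S ^ q.toReal :=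
            fun i => Real.div_rpow (abs_nonneg _) hSn _
          rw [Finset.sum_congr rfl fun i _ => this i, ← Finset.sum_div]
          rw [div_eq_one_iff_eq (by positivity)]
          rw [hS]
          unfold lpNorm
          rw [if_neg hqtop, ← Real.rpow_mul (Finset.sum_nonneg fun i _ =>
            Real.rpow_nonneg (abs_nonneg _) _), one_div_mul_cancel ht0.ne', Real.rpow_one]
        have h3 : ∀ i : Fin d, (|x i| / S) ^ p.toReal = |x i| ^ p.toReal / S ^ p.toReal :=
          fun i => Real.div_rpow (abs_nonneg _) hSn _
        rw [Finset.sum_congr rfl fun i _ => h3 i, ← Finset.sum_div, h2] at h1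
        exact (div_le_one (by positivity)).1 h1
      calc (∑ i, |x i| ^ p.toReal) ^ (1 / p.toReal)
          ≤ (S ^ p.toReal) ^ (1 / p.toReal) := by
            apply Real.rpow_le_rpow (Finset.sum_nonneg fun i _ =>
              Real.rpow_nonneg (abs_nonneg _) _) key (by positivity)
        _ = S := by
            rw [← Real.rpow_mul hSn, mul_one_div, div_self hs0.ne', Real.rpow_one]

end AuxLemmas

/-- Theorem 3: the optimal value of problem (P) equals `min {v_A, v_B}`, where
`v_A` (resp. `v_B`) is the optimal value of the restricted problem (P_A)
(resp. (P_B)); in particular, an optimal solution `x*` of (P) is the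
`x`-component of an optimal solution of the restricted problem achieving the
minimum. -/
theorem stmt_4 {d : ℕ} (pA pB : ℝ≥0∞) (hpB : 1 ≤ pB) (hBA : pB ≤ pA)
    (α : Fin d → ℝ) (hα : α ≠ 0) (β : ℝ)
    (A B : Finset (Fin d → ℝ))
    (hAH : ∀ a ∈ A, ∑ i, α i * a i ≤ β) (hBH : ∀ b ∈ B, β < ∑ i, α i * b i)
    (ω : (Fin d → ℝ) → ℝ) (hωA : ∀ a ∈ A, 0 < ω a) (hωB : ∀ b ∈ B, 0 < ω b)
    (vA vB : ℝ)
    (hvA : vA = sInf {v : ℝ | ∃ (x : Fin d → ℝ) (y : (Fin d → ℝ) → Fin d → ℝ),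
        (∑ i, α i * x i ≤ β) ∧ (∀ b ∈ B, ∑ i, α i * y b i = β) ∧
        v = (∑ a ∈ A, ω a * lpNorm pA (x - a)) +
          ∑ b ∈ B, ω b * (lpNorm pA (x - y b) + lpNorm pB (y b - b))})
    (hvB : vB = sInf {v : ℝ | ∃ (x : Fin d → ℝ) (y : (Fin d → ℝ) → Fin d → ℝ),
        (β ≤ ∑ i, α i * x i) ∧ (∀ a ∈ A, ∑ i, α i * y a i = β) ∧
        v = (∑ b ∈ B, ω b * lpNorm pB (x - b)) +
          ∑ a ∈ A, ω a * (lpNorm pB (x - y a) + lpNorm pA (y a - a))}) :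
    (⨅ x : Fin d → ℝ,
        ((∑ a ∈ A, ω a * mixDist pA pB α β x a) +
          ∑ b ∈ B, ω b * mixDist pA pB α β x b)) = min vA vB ∧
    ∀ x : Fin d → ℝ,
      (∀ y : Fin d → ℝ,
        (∑ a ∈ A, ω a * mixDist pA pB α β x a) + ∑ b ∈ B, ω b * mixDist pA pB α β x b ≤
          (∑ a ∈ A, ω a * mixDist pA pB α β y a) + ∑ b ∈ B, ω b * mixDist pA pB α β y b) →
      ((∑ i, α i * x i ≤ β ∧
          ∃ y : (Fin d → ℝ) → Fin d → ℝ, (∀ b ∈ B, ∑ i, α i * y b i = β) ∧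
            (∑ a ∈ A, ω a * lpNorm pA (x - a)) +
              (∑ b ∈ B, ω b * (lpNorm pA (x - y b) + lpNorm pB (y b - b))) = min vA vB) ∨
        (β ≤ ∑ i, α i * x i ∧
          ∃ y : (Fin d → ℝ) → Fin d → ℝ, (∀ a ∈ A, ∑ i, α i * y a i = β) ∧
            (∑ b ∈ B, ω b * lpNorm pB (x - b)) +
              (∑ a ∈ A, ω a * (lpNorm pB (x - y a) + lpNorm pA (y a - a))) = min vA vB)) := by
  have hpA : 1 ≤ pA := hpB.trans hBA
  obtain ⟨z1, hz1⟩ := exists_mem_hyperplane hα β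
  haveI : Nonempty {z : Fin d → ℝ // ∑ i, α i * z i = β} := ⟨⟨z1, hz1⟩⟩
  set F : (Fin d → ℝ) → ℝ := fun x =>
    (∑ a ∈ A, ω a * mixDist pA pB α β x a) + ∑ b ∈ B, ω b * mixDist pA pB α β x b with hF
  have hbddg : ∀ x b : Fin d → ℝ,
      BddBelow (Set.range fun z : {z : Fin d → ℝ // ∑ i, α i * z i = β} =>
        lpNorm pA (z.1 - x) + lpNorm pB (z.1 - b)) := by
    intro x b
    refine ⟨0, ?_⟩
    rintro v ⟨z, rfl⟩
    exact add_nonneg (lpNorm_nonneg _ _) (lpNorm_nonneg _ _)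
  have hmixnn : ∀ x y : Fin d → ℝ, 0 ≤ mixDist pA pB α β x y := by
    intro x y
    unfold mixDist
    split <;> split
    · exact lpNorm_nonneg _ _
    · exact Real.iInf_nonneg fun z => add_nonneg (lpNorm_nonneg _ _) (lpNorm_nonneg _ _)
    · exact Real.iInf_nonneg fun z => add_nonneg (lpNorm_nonneg _ _) (lpNorm_nonneg _ _)
    · exact lpNorm_nonneg _ _
  have hFnn : ∀ x, 0 ≤ F x := fun x =>
    add_nonneg (Finset.sum_nonneg fun a ha => mul_nonneg (hωA a ha).le (hmixnn _ _))
      (Finset.sum_nonneg fun b hb => mul_nonneg (hωB b hb).le (hmixnn _ _))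
  have hbddF : BddBelow (Set.range F) := ⟨0, by rintro v ⟨x, rfl⟩; exact hFnn x⟩
  -- decompositions of mixDist
  have hmixAa : ∀ x, (∑ i, α i * x i ≤ β) → ∀ a ∈ A,
      mixDist pA pB α β x a = lpNorm pA (x - a) := by
    intro x hx a ha
    unfold mixDist
    rw [if_pos hx, if_pos (hAH a ha)]
  have hmixAb : ∀ x, (∑ i, α i * x i ≤ β) → ∀ b ∈ B,
      mixDist pA pB α β x b = ⨅ z : {z : Fin d → ℝ // ∑ i, α i * z i = β},
        lpNorm pA (z.1 - x) + lpNorm pB (z.1 - b) := by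
    intro x hx b hb
    unfold mixDist
    rw [if_pos hx, if_neg (not_le.2 (hBH b hb))]
  have hmixBa : ∀ x, ¬(∑ i, α i * x i ≤ β) → ∀ a ∈ A,
      mixDist pA pB α β x a = ⨅ z : {z : Fin d → ℝ // ∑ i, α i * z i = β},
        lpNorm pA (z.1 - a) + lpNorm pB (z.1 - x) := by
    intro x hx a ha
    unfold mixDist
    rw [if_neg hx, if_pos (hAH a ha)]
  have hmixBb : ∀ x, ¬(∑ i, α i * x i ≤ β) → ∀ b ∈ B,
      mixDist pA pB α β x b = lpNorm pB (x - b) := by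
    intro x hx b hb
    unfold mixDist
    rw [if_neg hx, if_neg (not_le.2 (hBH b hb))]
  -- exact representation with optimal gates
  have hrepA : ∀ x, (∑ i, α i * x i ≤ β) →
      ∃ y : (Fin d → ℝ) → Fin d → ℝ, (∀ b ∈ B, ∑ i, α i * y b i = β) ∧
        F x = (∑ a ∈ A, ω a * lpNorm pA (x - a)) +
          ∑ b ∈ B, ω b * (lpNorm pA (x - y b) + lpNorm pB (y b - b)) := by
    intro x hx
    choose z0 hz0 using fun b : Fin d → ℝ => attain hpA hpB hα β x b
    refine ⟨fun b => (z0 b).1, fun b _ => (z0 b).2, ?_⟩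
    show (∑ a ∈ A, ω a * mixDist pA pB α β x a) + ∑ b ∈ B, ω b * mixDist pA pB α β x b = _
    congr 1
    · exact Finset.sum_congr rfl fun a ha => by rw [hmixAa x hx a ha]
    · refine Finset.sum_congr rfl fun b hb => ?_
      rw [hmixAb x hx b hb]
      congr 1
      have hval : (⨅ z : {z : Fin d → ℝ // ∑ i, α i * z i = β},
            lpNorm pA (z.1 - x) + lpNorm pB (z.1 - b))
          = lpNorm pA ((z0 b).1 - x) + lpNorm pB ((z0 b).1 - b) :=
        le_antisymm (ciInf_le (hbddg x b) (z0 b)) (le_ciInf (hz0 b))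
      rw [hval, lpNorm_sub_comm pA ((z0 b).1) x]
  have hrepB : ∀ x, ¬(∑ i, α i * x i ≤ β) →
      ∃ y : (Fin d → ℝ) → Fin d → ℝ, (∀ a ∈ A, ∑ i, α i * y a i = β) ∧
        F x = (∑ b ∈ B, ω b * lpNorm pB (x - b)) +
          ∑ a ∈ A, ω a * (lpNorm pB (x - y a) + lpNorm pA (y a - a)) := by
    intro x hx
    choose z0 hz0 using fun a : Fin d → ℝ => attain hpA hpB hα β a x
    refine ⟨fun a => (z0 a).1, fun a _ => (z0 a).2, ?_⟩
    show (∑ a ∈ A, ω a * mixDist pA pB α β x a) + ∑ b ∈ B, ω b * mixDist pA pB α β x b = _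
    rw [add_comm]
    congr 1
    · exact Finset.sum_congr rfl fun b hb => by rw [hmixBb x hx b hb]
    · refine Finset.sum_congr rfl fun a ha => ?_
      rw [hmixBa x hx a ha]
      congr 1
      have hval : (⨅ z : {z : Fin d → ℝ // ∑ i, α i * z i = β},
            lpNorm pA (z.1 - a) + lpNorm pB (z.1 - x))
          = lpNorm pA ((z0 a).1 - a) + lpNorm pB ((z0 a).1 - x) :=
        le_antisymm (ciInf_le (hbddg a x) (z0 a)) (le_ciInf (hz0 a))
      rw [hval, lpNorm_sub_comm pB ((z0 a).1) x, add_comm]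
  -- lower bounds on F
  have hvAle : ∀ x, (∑ i, α i * x i ≤ β) → vA ≤ F x := by
    intro x hx
    obtain ⟨y, hy, hFx⟩ := hrepA x hx
    rw [hvA]
    apply csInf_le
    · refine ⟨0, ?_⟩
      rintro v ⟨x', y', hx', hy', rfl⟩
      exact add_nonneg
        (Finset.sum_nonneg fun a ha => mul_nonneg (hωA a ha).le (lpNorm_nonneg _ _))
        (Finset.sum_nonneg fun b hb => mul_nonneg (hωB b hb).le
          (add_nonneg (lpNorm_nonneg _ _) (lpNorm_nonneg _ _)))
    · exact ⟨x, y, hx, hy, hFx⟩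
  have hvBle : ∀ x, ¬(∑ i, α i * x i ≤ β) → vB ≤ F x := by
    intro x hx
    obtain ⟨y, hy, hFx⟩ := hrepB x hx
    rw [hvB]
    apply csInf_le
    · refine ⟨0, ?_⟩
      rintro v ⟨x', y', hx', hy', rfl⟩
      exact add_nonneg
        (Finset.sum_nonneg fun b hb => mul_nonneg (hωB b hb).le (lpNorm_nonneg _ _))
        (Finset.sum_nonneg fun a ha => mul_nonneg (hωA a ha).le
          (add_nonneg (lpNorm_nonneg _ _) (lpNorm_nonneg _ _)))
    · exact ⟨x, y, (not_le.1 hx).le, hy, hFx⟩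
  have hmin_le : min vA vB ≤ ⨅ x, F x := by
    apply le_ciInf
    intro x
    by_cases hx : ∑ i, α i * x i ≤ β
    · exact (min_le_left _ _).trans (hvAle x hx)
    · exact (min_le_right _ _).trans (hvBle x hx)
  -- upper bounds
  have hFleA : (⨅ x, F x) ≤ vA := by
    rw [hvA]
    apply le_csInf
    · exact ⟨_, z1, fun _ => z1, le_of_eq hz1, fun _ _ => hz1, rfl⟩
    · rintro v ⟨x, y, hx, hy, rfl⟩
      refine le_trans (ciInf_le hbddF x) ?_
      apply add_le_add
      · exact le_of_eq (Finset.sum_congr rfl fun a ha => by rw [hmixAa x hx a ha])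
      · apply Finset.sum_le_sum
        intro b hb
        apply mul_le_mul_of_nonneg_left _ (hωB b hb).le
        rw [hmixAb x hx b hb]
        refine le_trans (ciInf_le (hbddg x b) ⟨y b, hy b hb⟩) ?_
        rw [lpNorm_sub_comm pA (y b) x]
  have hFleB : (⨅ x, F x) ≤ vB := by
    rw [hvB]
    apply le_csInf
    · exact ⟨_, z1, fun _ => z1, le_of_eq hz1.symm, fun _ _ => hz1, rfl⟩
    · rintro v ⟨x, y, hx, hy, rfl⟩
      refine le_trans (ciInf_le hbddF x) ?_
      by_cases hx' : ∑ i, α i * x i ≤ β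
      · -- x on the hyperplane
        have hxβ : ∑ i, α i * x i = β := le_antisymm hx' hx
        show (∑ a ∈ A, ω a * mixDist pA pB α β x a) + ∑ b ∈ B, ω b * mixDist pA pB α β x b ≤ _
        rw [add_comm]
        apply add_le_add
        · apply Finset.sum_le_sum
          intro b hb
          apply mul_le_mul_of_nonneg_left _ (hωB b hb).le
          rw [hmixAb x hx' b hb]
          refine le_trans (ciInf_le (hbddg x b) ⟨x, hxβ⟩) ?_
          rw [sub_self, lpNorm_zero hpA, zero_add]
        · apply Finset.sum_le_sum
          intro a ha
          apply mul_le_mul_of_nonneg_left _ (hωA a ha).le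
          rw [hmixAa x hx' a ha]
          calc lpNorm pA (x - a) = lpNorm pA ((x - y a) + (y a - a)) := by
                rw [sub_add_sub_cancel]
            _ ≤ lpNorm pA (x - y a) + lpNorm pA (y a - a) := lpNorm_add_le hpA _ _
            _ ≤ lpNorm pB (x - y a) + lpNorm pA (y a - a) :=
                add_le_add_left (lpNorm_anti hpB hBA _) _
      · show (∑ a ∈ A, ω a * mixDist pA pB α β x a) + ∑ b ∈ B, ω b * mixDist pA pB α β x b ≤ _
        rw [add_comm]
        apply add_le_add
        · exact le_of_eq (Finset.sum_congr rfl fun b hb => by rw [hmixBb x hx' b hb])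
        · apply Finset.sum_le_sum
          intro a ha
          apply mul_le_mul_of_nonneg_left _ (hωA a ha).le
          rw [hmixBa x hx' a ha]
          refine le_trans (ciInf_le (hbddg a x) ⟨y a, hy a ha⟩) ?_
          rw [lpNorm_sub_comm pB (y a) x, add_comm]
  have hiFF : (⨅ x, F x) = min vA vB := le_antisymm (le_min hFleA hFleB) hmin_le
  refine ⟨hiFF, ?_⟩
  intro x hopt
  have hFx : F x = min vA vB := by
    rw [← hiFF]
    exact le_antisymm (le_ciInf hopt) (ciInf_le hbddF x)
  by_cases hx : ∑ i, α i * x i ≤ β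
  · left
    obtain ⟨y, hy, hrep⟩ := hrepA x hx
    exact ⟨hx, y, hy, by rw [← hrep]; exact hFx⟩
  · right
    obtain ⟨y, hy, hrep⟩ := hrepB x hx
    exact ⟨(not_le.1 hx).le, y, hy, by rw [← hrep]; exact hFx⟩
end

section
/- Let r > s ≥ 1 be integers, set p = r/s, let X, Y ∈ ℝ^d and Z ≥ 0. Then ‖X − Y‖_p ≤ Z if and only if there exist Q, R ∈ ℝ^d such that for every k = 1,…,d: Q_k + X_k − Y_k ≥ 0, Q_k − X_k + Y_k ≥ 0, R_k ≥ 0, Q_k^r ≤ R_k^s · Z^{r−s}, and Σ_{k=1}^d R_k ≤ Z. -/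
open scoped ENNReal BigOperators

/-- Representation of the `ℓ_p` norm constraint `‖X − Y‖_p ≤ Z`, for `p = r/s`
with integers `r > s ≥ 1`, by a finite system of polynomial inequalities. -/
theorem stmt_6 {d : ℕ} (r s : ℕ) (hs : 1 ≤ s) (hrs : s < r)
    (X Y : Fin d → ℝ) (Z : ℝ) (hZ : 0 ≤ Z) :
    lpNormR ((r : ℝ) / (s : ℝ)) (X - Y) ≤ Z ↔
      ∃ Q R : Fin d → ℝ,
        (∀ k, Q k + X k - Y k ≥ 0 ∧ Q k - X k + Y k ≥ 0 ∧ 0 ≤ R k ∧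
          Q k ^ r ≤ R k ^ s * Z ^ (r - s)) ∧ ∑ k, R k ≤ Z := by
  have hs0 : (0:ℝ) < (s:ℝ) := by exact_mod_cast hs
  have hr0 : (0:ℝ) < (r:ℝ) := by exact_mod_cast hs.trans hrs.le
  set p : ℝ := (r:ℝ)/(s:ℝ) with hp
  have hp0 : 0 < p := by positivity
  have hsr : (s:ℝ) < (r:ℝ) := by exact_mod_cast hrs
  have hp1 : 1 < p := (one_lt_div hs0).2 hsr
  have hcast : ((r - s : ℕ) : ℝ) = (r:ℝ) - (s:ℝ) := by
    push_cast [Nat.cast_sub hrs.le]; ring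
  have hps : p * (s:ℝ) = (r:ℝ) := by rw [hp, div_mul_cancel₀ _ hs0.ne']
  have hrs1 : s ≤ r - 1 := by omega
  simp only [lpNormR, Pi.sub_apply]
  rcases eq_or_lt_of_le hZ with hZ0 | hZpos
  · -- Z = 0 case
    subst hZ0
    constructor
    · intro h
      have hS : 0 ≤ ∑ k, |X k - Y k| ^ p :=
        Finset.sum_nonneg fun k _ => Real.rpow_nonneg (abs_nonneg _) _
      have hS0 : (∑ k, |X k - Y k| ^ p) ^ (1/p) = 0 := le_antisymm h (Real.rpow_nonneg hS _)
      have hS0' : ∑ k, |X k - Y k| ^ p = 0 := by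
        by_contra hne
        have : 0 < ∑ k, |X k - Y k| ^ p := lt_of_le_of_ne hS (Ne.symm hne)
        exact absurd hS0 (Real.rpow_pos_of_pos this _).ne'
      have hall : ∀ k ∈ Finset.univ, |X k - Y k| ^ p = 0 := by
        intro k _
        have := (Finset.sum_eq_zero_iff_of_nonneg
          (fun k _ => Real.rpow_nonneg (abs_nonneg _) _)).1 hS0' k (Finset.mem_univ k)
        exact this
      have hx : ∀ k, X k - Y k = 0 := by
        intro k
        have h0 := hall k (Finset.mem_univ k)
        have := (Real.rpow_eq_zero (abs_nonneg _) hp0.ne').1 h0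
        exact abs_eq_zero.1 this
      refine ⟨0, 0, fun k => ?_, by simp⟩
      have := hx k
      refine ⟨by simp; linarith, by simp; linarith, le_rfl, ?_⟩
      simp [zero_pow (show r ≠ 0 by omega), zero_pow (show s ≠ 0 by omega)]
    · rintro ⟨Q, R, hQR, -⟩
      have hx : ∀ k, X k - Y k = 0 := by
        intro k
        obtain ⟨h1, h2, h3, h4⟩ := hQR k
        have hQnn : 0 ≤ Q k := by
          rcases le_total 0 (X k - Y k) with h | h <;> linarith
        have hz : (0:ℝ) ^ (r - s) = 0 := zero_pow (by omega)
        rw [hz, mul_zero] at h4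
        have : Q k ^ r = 0 := le_antisymm h4 (pow_nonneg hQnn r)
        have hQ0 : Q k = 0 := by
          have := pow_eq_zero_iff (n := r) (by omega : r ≠ 0) |>.1 this
          exact this
        rw [hQ0] at h1 h2
        linarith
      have : (∑ k, |X k - Y k| ^ p) = 0 := by
        apply Finset.sum_eq_zero
        intro k _
        rw [hx k, abs_zero, Real.zero_rpow hp0.ne']
      rw [this, Real.zero_rpow (by positivity : (1:ℝ)/p ≠ 0)]
  · -- Z > 0 case
    have hZr : ∀ (t : ℝ), Z ^ ((t:ℝ)) > 0 := fun t => Real.rpow_pos_of_pos hZpos t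
    constructor
    · intro h
      set a : Fin d → ℝ := fun k => |X k - Y k| with ha
      have han : ∀ k, 0 ≤ a k := fun k => abs_nonneg _
      refine ⟨a, fun k => a k ^ p / Z ^ (p - 1), fun k => ?_, ?_⟩
      · refine ⟨?_, ?_, by positivity, ?_⟩
        · have := neg_abs_le (X k - Y k); simp only [ha]; linarith
        · have := le_abs_self (X k - Y k); simp only [ha]; linarith
        · -- equality: (a^p / Z^(p-1))^s * Z^(r-s) = a^r
          have e1 : (a k ^ p) ^ (s:ℕ) = a k ^ (r:ℝ) := by
            rw [← Real.rpow_natCast (a k ^ p) s, ← Real.rpow_mul (han k), hps]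
          have e2 : (Z ^ (p-1)) ^ (s:ℕ) = Z ^ ((r:ℝ) - s) := by
            rw [← Real.rpow_natCast (Z ^ (p-1)) s, ← Real.rpow_mul hZ]
            congr 1
            rw [sub_mul, hps, one_mul]
          have e3 : Z ^ ((r - s : ℕ)) = Z ^ ((r:ℝ) - s) := by
            rw [← Real.rpow_natCast Z (r-s), hcast]
          have e4 : a k ^ (r:ℕ) = a k ^ (r:ℝ) := (Real.rpow_natCast (a k) r).symm
          rw [div_pow, e1, e2, e3, e4, div_mul_cancel₀]
          exact (hZr _).ne'
      · have hS : 0 ≤ ∑ k, a k ^ p :=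
          Finset.sum_nonneg fun k _ => Real.rpow_nonneg (han k) _
        have hSZ : (∑ k, a k ^ p) ≤ Z ^ p := by
          have := Real.rpow_le_rpow (Real.rpow_nonneg hS _) h hp0.le
          rwa [one_div, Real.rpow_inv_rpow hS hp0.ne'] at this
        rw [← Finset.sum_div]
        rw [div_le_iff₀ (hZr (p-1))]
        calc (∑ k, a k ^ p) ≤ Z ^ p := hSZ
          _ = Z * Z ^ (p - 1) := by
              have h1 : Z ^ p = Z ^ (1 + (p-1)) := by ring_nf
              rw [h1, Real.rpow_add hZpos, Real.rpow_one]
    · rintro ⟨Q, R, hQR, hsum⟩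
      have key : ∀ k, |X k - Y k| ^ p ≤ R k * Z ^ (p - 1) := by
        intro k
        obtain ⟨h1, h2, h3, h4⟩ := hQR k
        have habs : |X k - Y k| ≤ Q k := abs_le.2 ⟨by linarith, by linarith⟩
        have hQnn : 0 ≤ Q k := (abs_nonneg _).trans habs
        have step1 : |X k - Y k| ^ p ≤ Q k ^ p :=
          Real.rpow_le_rpow (abs_nonneg _) habs hp0.le
        have step2 : Q k ^ p = (Q k ^ (r:ℕ)) ^ ((s:ℝ)⁻¹) := by
          rw [← Real.rpow_natCast (Q k) r, ← Real.rpow_mul hQnn]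
          congr 1
        have step3 : (R k ^ (s:ℕ) * Z ^ (r - s)) ^ ((s:ℝ)⁻¹) = R k * Z ^ (p - 1) := by
          rw [Real.mul_rpow (pow_nonneg h3 s) (pow_nonneg hZ _),
            ← Real.rpow_natCast (R k) s, ← Real.rpow_mul h3,
            mul_inv_cancel₀ hs0.ne', Real.rpow_one,
            ← Real.rpow_natCast Z (r - s), ← Real.rpow_mul hZ, hcast]
          congr 1
          rw [sub_mul, mul_inv_cancel₀ hs0.ne', ← div_eq_mul_inv, hp]
        calc |X k - Y k| ^ p ≤ Q k ^ p := step1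
          _ = (Q k ^ (r:ℕ)) ^ ((s:ℝ)⁻¹) := step2
          _ ≤ (R k ^ (s:ℕ) * Z ^ (r - s)) ^ ((s:ℝ)⁻¹) :=
              Real.rpow_le_rpow (pow_nonneg hQnn r) h4 (by positivity)
          _ = R k * Z ^ (p - 1) := step3
      have hSZ : (∑ k, |X k - Y k| ^ p) ≤ Z ^ p := by
        calc (∑ k, |X k - Y k| ^ p) ≤ ∑ k, R k * Z ^ (p - 1) :=
              Finset.sum_le_sum fun k _ => key k
          _ = (∑ k, R k) * Z ^ (p - 1) := by rw [← Finset.sum_mul]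
          _ ≤ Z * Z ^ (p - 1) := by
              apply mul_le_mul_of_nonneg_right hsum (hZr (p-1)).le
          _ = Z ^ p := by
              have h1 : Z ^ p = Z ^ (1 + (p-1)) := by ring_nf
              rw [h1, Real.rpow_add hZpos, Real.rpow_one]
      have hS : 0 ≤ ∑ k, |X k - Y k| ^ p :=
        Finset.sum_nonneg fun k _ => Real.rpow_nonneg (abs_nonneg _) _
      calc (∑ k, |X k - Y k| ^ p) ^ (1/p) ≤ (Z ^ p) ^ (1/p) :=
            Real.rpow_le_rpow hS hSZ (by positivity)
        _ = Z := by rw [one_div, Real.rpow_rpow_inv hZ hp0.ne']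
end

section
/- Let 1 < p < ∞ with d ≥ 2, let A ⊂ ℝ^d be a finite set whose points are not all contained in a single line, and let ω_a > 0 for each a ∈ A. Then the function x ↦ Σ_{a∈A} ω_a ‖x − a‖_p is strictly convex on ℝ^d. -/
open scoped BigOperators

lemma absRpow_strictConvexOn {p : ℝ} (hp : 1 < p) :
    StrictConvexOn ℝ Set.univ (fun t : ℝ => |t| ^ p) := by
  have hp0 : 0 < p := lt_trans one_pos hp
  refine ⟨convex_univ, ?_⟩
  intro t _ s _ hts a b ha hb hab
  simp only [smul_eq_mul]
  by_cases h : |t| = |s|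
  · -- then s = -t, t ≠ 0
    have hs : s = -t := by
      rcases abs_eq_abs.1 h with h1 | h1
      · exact absurd h1 hts
      · linarith
    have ht0 : t ≠ 0 := by
      intro h0; apply hts; rw [h0, hs, h0, neg_zero]
    have habs : |a * t + b * s| = |a - b| * |t| := by
      rw [hs]; rw [show a * t + b * -t = (a - b) * t by ring, abs_mul]
    have hab1 : |a - b| < 1 := by
      rw [abs_lt]; constructor <;> linarith
    have hlt : |a * t + b * s| < |t| := by
      rw [habs]
      have := abs_pos.2 ht0
      nlinarith
    have : |a * t + b * s| ^ p < |t| ^ p :=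
      Real.rpow_lt_rpow (abs_nonneg _) hlt hp0
    calc |a * t + b * s| ^ p < |t| ^ p := this
      _ = a * |t| ^ p + b * |s| ^ p := by rw [← h, ← add_mul, hab, one_mul]
  · have h1 : |a * t + b * s| ^ p ≤ (a * |t| + b * |s|) ^ p := by
      apply Real.rpow_le_rpow (abs_nonneg _) _ hp0.le
      calc |a * t + b * s| ≤ |a * t| + |b * s| := abs_add_le _ _
        _ = a * |t| + b * |s| := by
            rw [abs_mul, abs_mul, abs_of_pos ha, abs_of_pos hb]
    have h2 : (a * |t| + b * |s|) ^ p < a * |t| ^ p + b * |s| ^ p := by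
      have := (strictConvexOn_rpow hp).2 (Set.mem_Ici.2 (abs_nonneg t))
        (Set.mem_Ici.2 (abs_nonneg s)) h ha hb hab
      simpa using this
    exact lt_of_le_of_lt h1 h2

lemma sumAbsRpow_strictConvexOn {d : ℕ} {p : ℝ} (hp : 1 < p) :
    StrictConvexOn ℝ Set.univ (fun z : Fin d → ℝ => ∑ k, |z k| ^ p) := by
  refine ⟨convex_univ, ?_⟩
  intro x _ y _ hxy a b ha hb hab
  obtain ⟨k0, hk0⟩ := Function.ne_iff.1 hxy
  have hle : ∀ k ∈ Finset.univ, |(a • x + b • y) k| ^ p ≤ a * |x k| ^ p + b * |y k| ^ p := by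
    intro k _
    have := (absRpow_strictConvexOn hp).convexOn.2 (Set.mem_univ (x k)) (Set.mem_univ (y k))
      ha.le hb.le hab
    simpa using this
  have hstrict : |(a • x + b • y) k0| ^ p < a * |x k0| ^ p + b * |y k0| ^ p := by
    have := (absRpow_strictConvexOn hp).2 (Set.mem_univ (x k0)) (Set.mem_univ (y k0)) hk0 ha hb hab
    simpa using this
  calc ∑ k, |(a • x + b • y) k| ^ p < ∑ k, (a * |x k| ^ p + b * |y k| ^ p) :=
        Finset.sum_lt_sum hle ⟨k0, Finset.mem_univ _, hstrict⟩
    _ = a • ∑ k, |x k| ^ p + b • ∑ k, |y k| ^ p := by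
        rw [Finset.sum_add_distrib, ← Finset.mul_sum, ← Finset.mul_sum]; simp

/-- Strict convexity of the weighted sum of `ℓ_p` distances (`1 < p < ∞`) to a
finite set of non-collinear points. -/
theorem stmt_8 {d : ℕ} (hd : 2 ≤ d) (p : ℝ) (hp : 1 < p)
    (A : Finset (Fin d → ℝ))
    (hAline : ¬ ∃ u v : Fin d → ℝ, ∀ a ∈ A, ∃ t : ℝ, a = u + t • v)
    (ω : (Fin d → ℝ) → ℝ) (hω : ∀ a ∈ A, 0 < ω a) :
    StrictConvexOn ℝ Set.univ (fun x : Fin d → ℝ => ∑ a ∈ A, ω a * lpNormR p (x - a)) := by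
  have hp0 : 0 < p := lt_trans one_pos hp
  set P : ENNReal := ENNReal.ofReal p with hP
  haveI : Fact (1 ≤ P) := ⟨ENNReal.one_le_ofReal.2 hp.le⟩
  have hPto : P.toReal = p := ENNReal.toReal_ofReal hp0.le
  set e : (Fin d → ℝ) → PiLp P (fun _ : Fin d => ℝ) := ⇑(WithLp.equiv P (Fin d → ℝ)).symm with he
  -- bridge between lpNormR and the PiLp norm
  have hbridge : ∀ z : Fin d → ℝ, ‖e z‖ = lpNormR p z := by
    intro z
    rw [PiLp.norm_eq_sum (by rw [hPto]; exact hp0)]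
    simp only [lpNormR, hPto, he, WithLp.equiv_symm_apply, WithLp.ofLp_toLp, Real.norm_eq_abs]
  -- strict convexity of the PiLp space
  haveI hSC : StrictConvexSpace ℝ (PiLp P (fun _ : Fin d => ℝ)) := by
    apply StrictConvexSpace.of_norm_add_ne_two
    intro x y hx hy hxy hne
    -- g z = ∑ |z k|^p
    set g : (Fin d → ℝ) → ℝ := fun z => ∑ k, |z k| ^ p with hg
    have hnorm : ∀ w : PiLp P (fun _ : Fin d => ℝ),
        ‖w‖ = (g (WithLp.equiv P (Fin d → ℝ) w)) ^ (1 / p) := by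
      intro w
      rw [PiLp.norm_eq_sum (by rw [hPto]; exact hp0)]
      simp only [hg, hPto, Real.norm_eq_abs, WithLp.equiv_apply]
    have hgnn : ∀ z, 0 ≤ g z := by
      intro z
      apply Finset.sum_nonneg
      intro k _
      positivity
    have hgx : g (WithLp.equiv P (Fin d → ℝ) x) = 1 := by
      have := hnorm x
      rw [hx] at this
      have := congrArg (fun r : ℝ => r ^ p) this
      simp only [Real.one_rpow] at this
      rw [one_div, Real.rpow_inv_rpow (hgnn _) hp0.ne'] at this
      exact this.symm
    have hgy : g (WithLp.equiv P (Fin d → ℝ) y) = 1 := by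
      have := hnorm y
      rw [hy] at this
      have := congrArg (fun r : ℝ => r ^ p) this
      simp only [Real.one_rpow] at this
      rw [one_div, Real.rpow_inv_rpow (hgnn _) hp0.ne'] at this
      exact this.symm
    have hxy' : WithLp.equiv P (Fin d → ℝ) x ≠ WithLp.equiv P (Fin d → ℝ) y := by
      intro h; exact hxy ((WithLp.equiv P (Fin d → ℝ)).injective h)
    have hmid : g ((2⁻¹ : ℝ) • WithLp.equiv P (Fin d → ℝ) x
        + (2⁻¹ : ℝ) • WithLp.equiv P (Fin d → ℝ) y) < 1 := by
      have h2 := (sumAbsRpow_strictConvexOn hp).2 (Set.mem_univ _) (Set.mem_univ _) hxy'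
        (show (0:ℝ) < 2⁻¹ by norm_num) (show (0:ℝ) < 2⁻¹ by norm_num) (by norm_num)
      rw [← hg] at h2
      rw [hgx, hgy] at h2
      simp only [smul_eq_mul, mul_one] at h2
      linarith
    have hhalf : ‖(2⁻¹ : ℝ) • (x + y)‖ < 1 := by
      rw [hnorm]
      have harg : WithLp.equiv P (Fin d → ℝ) ((2⁻¹ : ℝ) • (x + y))
          = (2⁻¹ : ℝ) • WithLp.equiv P (Fin d → ℝ) x
            + (2⁻¹ : ℝ) • WithLp.equiv P (Fin d → ℝ) y := by
        simp [smul_add]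
      rw [harg]
      calc (g _) ^ (1/p) < 1 ^ (1/p) :=
            Real.rpow_lt_rpow (hgnn _) hmid (by positivity)
        _ = 1 := Real.one_rpow _
    rw [norm_smul, hne, Real.norm_eq_abs,
      abs_of_pos (show (0:ℝ) < 2⁻¹ by norm_num)] at hhalf
    norm_num at hhalf
  -- main argument
  refine ⟨convex_univ, ?_⟩
  intro x _ y _ hxy a b ha hb hab
  simp only [smul_eq_mul]
  -- pick a point not on the line through x and y
  have hex : ∃ c ∈ A, ∀ t : ℝ, c ≠ x + t • (y - x) := by
    by_contra hcon
    push_neg at hcon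
    exact hAline ⟨x, y - x, fun c hc => hcon c hc⟩
  obtain ⟨c0, hc0A, hc0⟩ := hex
  have key_le : ∀ c : Fin d → ℝ,
      lpNormR p (a • x + b • y - c) ≤ a * lpNormR p (x - c) + b * lpNormR p (y - c) := by
    intro c
    have hc : a • x + b • y - c = a • (x - c) + b • (y - c) := by
      funext k
      simp only [Pi.add_apply, Pi.sub_apply, Pi.smul_apply, smul_eq_mul]
      linear_combination (c k) * hab
    rw [hc, ← hbridge, ← hbridge, ← hbridge]
    have hmap : e (a • (x - c) + b • (y - c)) = a • e (x - c) + b • e (y - c) := by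
      simp [he]
    rw [hmap]
    calc ‖a • e (x - c) + b • e (y - c)‖ ≤ ‖a • e (x - c)‖ + ‖b • e (y - c)‖ := norm_add_le _ _
      _ = a * ‖e (x - c)‖ + b * ‖e (y - c)‖ := by
          rw [norm_smul, norm_smul, Real.norm_of_nonneg ha.le, Real.norm_of_nonneg hb.le]
  have key_lt : lpNormR p (a • x + b • y - c0)
      < a * lpNormR p (x - c0) + b * lpNormR p (y - c0) := by
    have hc : a • x + b • y - c0 = a • (x - c0) + b • (y - c0) := by
      funext k
      simp only [Pi.add_apply, Pi.sub_apply, Pi.smul_apply, smul_eq_mul]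
      linear_combination (c0 k) * hab
    rw [hc, ← hbridge, ← hbridge, ← hbridge]
    have hmap : e (a • (x - c0) + b • (y - c0)) = a • e (x - c0) + b • e (y - c0) := by
      simp [he]
    rw [hmap]
    have hnsr2 : ¬ SameRay ℝ (a • e (x - c0)) (b • e (y - c0)) := by
      intro hsr
      have hx0 : x - c0 ≠ 0 := by
        intro h
        exact hc0 0 (by rw [zero_smul, add_zero]; rw [sub_eq_zero] at h; exact h.symm)
      have hy0 : y - c0 ≠ 0 := by
        intro h
        exact hc0 1 (by rw [one_smul]; rw [sub_eq_zero] at h; rw [← h]; abel)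
      have hex0 : e (x - c0) ≠ 0 := by
        simp only [he]
        intro h
        exact hx0 ((WithLp.equiv P (Fin d → ℝ)).symm.injective (by simpa using h))
      have hey0 : e (y - c0) ≠ 0 := by
        simp only [he]
        intro h
        exact hy0 ((WithLp.equiv P (Fin d → ℝ)).symm.injective (by simpa using h))
      obtain ⟨r', s', hr', hs', hrs⟩ := hsr.exists_pos
        (smul_ne_zero ha.ne' hex0) (smul_ne_zero hb.ne' hey0)
      set r : ℝ := r' * a with hrdef
      set s : ℝ := s' * b with hsdef
      have hr : 0 < r := mul_pos hr' ha
      have hs : 0 < s := mul_pos hs' hb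
      rw [smul_smul, smul_smul] at hrs
      have hrs' : r • (x - c0) = s • (y - c0) := by
        have := congrArg (WithLp.equiv P (Fin d → ℝ)) hrs
        simpa [he] using this
      by_cases hrseq : r = s
      · -- then x = y
        apply hxy
        funext k
        have hk := congrFun hrs' k
        simp only [Pi.smul_apply, Pi.sub_apply, smul_eq_mul, hrseq] at hk
        have : s * (x k) = s * (y k) := by linarith
        exact mul_left_cancel₀ hs.ne' this
      · apply hc0 (s / (s - r))
        have hsr0 : s - r ≠ 0 := sub_ne_zero.2 (Ne.symm hrseq)
        funext k
        have hk := congrFun hrs' k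
        simp only [Pi.smul_apply, Pi.sub_apply, smul_eq_mul] at hk
        simp only [Pi.add_apply, Pi.smul_apply, Pi.sub_apply, smul_eq_mul]
        field_simp
        ring_nf
        ring_nf at hk
        nlinarith [hk]
    calc ‖a • e (x - c0) + b • e (y - c0)‖ < ‖a • e (x - c0)‖ + ‖b • e (y - c0)‖ :=
          norm_add_lt_of_not_sameRay hnsr2
      _ = a * ‖e (x - c0)‖ + b * ‖e (y - c0)‖ := by
          rw [norm_smul, norm_smul, Real.norm_of_nonneg ha.le, Real.norm_of_nonneg hb.le]
  calc ∑ c ∈ A, ω c * lpNormR p (a • x + b • y - c)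
      < ∑ c ∈ A, (a * (ω c * lpNormR p (x - c)) + b * (ω c * lpNormR p (y - c))) := by
        apply Finset.sum_lt_sum
        · intro c hc
          have := key_le c
          nlinarith [hω c hc, key_le c]
        · refine ⟨c0, hc0A, ?_⟩
          nlinarith [hω c0 hc0A, key_lt]
    _ = a * ∑ c ∈ A, ω c * lpNormR p (x - c) + b * ∑ c ∈ A, ω c * lpNormR p (y - c) := by
        rw [Finset.sum_add_distrib, ← Finset.mul_sum, ← Finset.mul_sum]
end

section
/- Let d = 2, equip both halfplanes and the line with the Euclidean norm ‖·‖₂, let 𝓗 = {(x₁, x₂) ∈ ℝ² : x₂ = 0}, let a = (a₁, a₂) with a₂ < 0 and b = (b₁, b₂) with b₂ > 0, and let ω_a, ω_b, ω_H > 0. If (x*, y*) ∈ 𝓗 × 𝓗 minimizes (x, y) ↦ ω_a‖x − a‖₂ + ω_H‖x − y‖₂ + ω_b‖y − b‖₂ over 𝓗 × 𝓗, then one of the following holds: (1) x* ≠ y* and ω_a |a₁ − x*₁| / ‖x* − a‖₂ = ω_b |b₁ − y*₁| / ‖y* − b‖₂ = ω_H |x*₁ − y*₁| / ‖x* − y*‖₂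 (the last quantity equals ω_H); or (2) x* = y* and ω_a |a₁ − x*₁| / ‖x* − a‖₂ = ω_b |b₁ − x*₁| / ‖x* − b‖₂. -/
open scoped ENNReal BigOperators

lemma lp2_eval (u v : Fin 2 → ℝ) :
    lpNorm 2 (u - v) = Real.sqrt ((u 0 - v 0)^2 + (u 1 - v 1)^2) := by
  unfold lpNorm
  rw [if_neg (by norm_num), Real.sqrt_eq_rpow]
  norm_num [Fin.sum_univ_two, Real.rpow_two, sq_abs]

lemma hasDerivAt_sqrtdist (c s t : ℝ) (hs : 0 < s) :
    HasDerivAt (fun u => Real.sqrt ((u - c)^2 + s))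
      ((t - c) / Real.sqrt ((t - c)^2 + s)) t := by
  have hg : HasDerivAt (fun u : ℝ => (u - c)^2 + s) (2 * (t - c)) t := by
    have h1 : HasDerivAt (fun u : ℝ => u - c) 1 t := (hasDerivAt_id t).sub_const c
    have := (h1.pow 2).add_const s
    simpa using this
  have hne : (t - c)^2 + s ≠ 0 := by positivity
  have := hg.sqrt hne
  have h2 : 0 < Real.sqrt ((t - c)^2 + s) := Real.sqrt_pos.mpr (by positivity)
  convert this using 1
  field_simp

lemma hasDerivAt_absdist (c t : ℝ) (h : t ≠ c) :
    HasDerivAt (fun u => |u - c|) ((t - c) / |t - c|) t := by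
  rcases lt_or_gt_of_ne h with hlt | hgt
  · have h1 : HasDerivAt (fun u : ℝ => c - u) (-1) t := by
      simpa using ((hasDerivAt_id t).const_sub c)
    have heq : (fun u : ℝ => |u - c|) =ᶠ[nhds t] fun u => c - u := by
      filter_upwards [Iio_mem_nhds hlt] with u hu
      rw [abs_of_neg (sub_neg.mpr (Set.mem_Iio.mp hu))]; ring
    have h2 := h1.congr_of_eventuallyEq heq
    have h3 : (t - c) / |t - c| = -1 := by
      rw [abs_of_neg (sub_neg.mpr hlt), div_neg,
        div_self (sub_ne_zero.mpr h)]
    rw [h3]; exact h2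
  · have h1 : HasDerivAt (fun u : ℝ => u - c) 1 t := (hasDerivAt_id t).sub_const c
    have heq : (fun u : ℝ => |u - c|) =ᶠ[nhds t] fun u => u - c := by
      filter_upwards [Ioi_mem_nhds hgt] with u hu
      rw [abs_of_pos (sub_pos.mpr (Set.mem_Ioi.mp hu))]
    have h2 := h1.congr_of_eventuallyEq heq
    have h3 : (t - c) / |t - c| = 1 := by
      rw [abs_of_pos (sub_pos.mpr hgt), div_self (sub_ne_zero.mpr h)]
    rw [h3]; exact h2

lemma deriv_zero_of_min {f : ℝ → ℝ} {x D : ℝ} (hm : ∀ t, f x ≤ f t)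
    (hd : HasDerivAt f D x) : D = 0 := by
  have hloc : IsLocalMin f x := Filter.Eventually.of_forall hm
  exact hloc.hasDerivAt_eq_zero hd

lemma abs_key {w r v co s : ℝ} (hw : 0 < w) (hr : 0 < r) (hs : s ≠ 0) (hc : 0 < co)
    (h : w * (v / r) + co * (s / |s|) = 0) : w * |v| / r = co := by
  have h2 : w * (v / r) = -(co * (s / |s|)) := by linarith
  have h3 : |w * (v / r)| = |(-(co * (s / |s|)))| := by rw [h2]
  rw [abs_neg, abs_mul, abs_mul, abs_div, abs_div, abs_abs,
    div_self (abs_ne_zero.mpr hs), mul_one, abs_of_pos hw, abs_of_pos hr] at h3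
  rw [mul_div_assoc, h3, abs_of_pos hc]

/-- Snell's law in the plane when the separating line `x₂ = 0` is itself a
transit medium with weight `ω_H`: the optimal gate points `x*, y*` satisfy
either (1) `x* ≠ y*` and `ω_a sin θ_a = ω_b sin θ_b = ω_H |x*₁ − y*₁|/‖x* − y*‖₂`,
or (2) `x* = y*` and `ω_a sin θ_a = ω_b sin θ_b`. -/
theorem stmt_10 (a b : Fin 2 → ℝ) (ha : a 1 < 0) (hb : 0 < b 1)
    (ωa ωb ωH : ℝ) (hωa : 0 < ωa) (hωb : 0 < ωb) (hωH : 0 < ωH)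
    (xs ys : Fin 2 → ℝ) (hxs : xs 1 = 0) (hys : ys 1 = 0)
    (hmin : ∀ x y : Fin 2 → ℝ, x 1 = 0 → y 1 = 0 →
        ωa * lpNorm 2 (xs - a) + ωH * lpNorm 2 (xs - ys) + ωb * lpNorm 2 (ys - b) ≤
          ωa * lpNorm 2 (x - a) + ωH * lpNorm 2 (x - y) + ωb * lpNorm 2 (y - b)) :
    (xs ≠ ys ∧
      ωa * |a 0 - xs 0| / lpNorm 2 (xs - a) = ωb * |b 0 - ys 0| / lpNorm 2 (ys - b) ∧
      ωb * |b 0 - ys 0| / lpNorm 2 (ys - b) =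
        ωH * |xs 0 - ys 0| / lpNorm 2 (xs - ys)) ∨
    (xs = ys ∧
      ωa * |a 0 - xs 0| / lpNorm 2 (xs - a) = ωb * |b 0 - xs 0| / lpNorm 2 (xs - b)) := by
  have hsa : (0 : ℝ) < (a 1)^2 := by nlinarith
  have hsb : (0 : ℝ) < (b 1)^2 := by nlinarith
  have heA : lpNorm 2 (xs - a) = Real.sqrt ((xs 0 - a 0)^2 + (a 1)^2) := by
    rw [lp2_eval, hxs]; congr 1; ring
  have heB : lpNorm 2 (ys - b) = Real.sqrt ((ys 0 - b 0)^2 + (b 1)^2) := by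
    rw [lp2_eval, hys]; congr 1; ring
  have heXB : lpNorm 2 (xs - b) = Real.sqrt ((xs 0 - b 0)^2 + (b 1)^2) := by
    rw [lp2_eval, hxs]; congr 1; ring
  have heXY : lpNorm 2 (xs - ys) = |xs 0 - ys 0| := by
    rw [lp2_eval, hxs, hys]; simp [Real.sqrt_sq_eq_abs]
  have heTA : ∀ t : ℝ, lpNorm 2 (![t, 0] - a) = Real.sqrt ((t - a 0)^2 + (a 1)^2) := by
    intro t; rw [lp2_eval]
    simp only [Pi.sub_apply, Matrix.cons_val_zero, Matrix.cons_val_one, Matrix.head_cons]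
    congr 1; ring
  have heTB : ∀ t : ℝ, lpNorm 2 (![t, 0] - b) = Real.sqrt ((t - b 0)^2 + (b 1)^2) := by
    intro t; rw [lp2_eval]
    simp only [Pi.sub_apply, Matrix.cons_val_zero, Matrix.cons_val_one, Matrix.head_cons]
    congr 1; ring
  have heTY : ∀ t : ℝ, lpNorm 2 (![t, 0] - ys) = |t - ys 0| := by
    intro t; rw [lp2_eval]
    simp only [Pi.sub_apply, Matrix.cons_val_zero, Matrix.cons_val_one, Matrix.head_cons,
      hys]
    simp [Real.sqrt_sq_eq_abs]
  have heXT : ∀ t : ℝ, lpNorm 2 (xs - ![t, 0]) = |t - xs 0| := by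
    intro t; rw [lp2_eval]
    simp only [Pi.sub_apply, Matrix.cons_val_zero, Matrix.cons_val_one, Matrix.head_cons,
      hxs]
    rw [show (0:ℝ) - 0 = 0 by ring]
    simp [Real.sqrt_sq_eq_abs, abs_sub_comm]
  have hrapos : 0 < Real.sqrt ((xs 0 - a 0)^2 + (a 1)^2) := Real.sqrt_pos.mpr (by positivity)
  have hrbpos : 0 < Real.sqrt ((ys 0 - b 0)^2 + (b 1)^2) := Real.sqrt_pos.mpr (by positivity)
  by_cases hxy : xs 0 = ys 0
  · -- case (2): xs = ys
    have hxyeq : xs = ys := by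
      funext i
      fin_cases i
      · exact hxy
      · show xs 1 = ys 1
        rw [hxs, hys]
    right
    refine ⟨hxyeq, ?_⟩
    have hzero : lpNorm 2 (xs - ys) = 0 := by rw [heXY, hxy, sub_self, abs_zero]
    have hφmin : ∀ t : ℝ,
        ωa * Real.sqrt ((xs 0 - a 0)^2 + (a 1)^2)
          + ωb * Real.sqrt ((xs 0 - b 0)^2 + (b 1)^2) ≤
        ωa * Real.sqrt ((t - a 0)^2 + (a 1)^2)
          + ωb * Real.sqrt ((t - b 0)^2 + (b 1)^2) := by
      intro t
      have h := hmin ![t, 0] ![t, 0] (by simp) (by simp)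
      rw [heA, hzero, heTA t, heTB t, ← hxyeq, heXB] at h
      have hz2 : lpNorm 2 (![t, 0] - ![t, 0]) = 0 := by
        rw [lp2_eval]; simp
      rw [hz2] at h
      linarith
    have hd : HasDerivAt (fun t => ωa * Real.sqrt ((t - a 0)^2 + (a 1)^2)
          + ωb * Real.sqrt ((t - b 0)^2 + (b 1)^2))
        (ωa * ((xs 0 - a 0) / Real.sqrt ((xs 0 - a 0)^2 + (a 1)^2))
          + ωb * ((xs 0 - b 0) / Real.sqrt ((xs 0 - b 0)^2 + (b 1)^2))) (xs 0) :=
      ((hasDerivAt_sqrtdist (a 0) _ (xs 0) hsa).const_mul ωa).add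
        ((hasDerivAt_sqrtdist (b 0) _ (xs 0) hsb).const_mul ωb)
    have hD := deriv_zero_of_min hφmin hd
    rw [heA, heXB]
    have h2 : ωa * ((xs 0 - a 0) / Real.sqrt ((xs 0 - a 0)^2 + (a 1)^2))
        = -(ωb * ((xs 0 - b 0) / Real.sqrt ((xs 0 - b 0)^2 + (b 1)^2))) := by linarith
    have h3 := congrArg abs h2
    have hrbpos' : 0 < Real.sqrt ((xs 0 - b 0)^2 + (b 1)^2) :=
      Real.sqrt_pos.mpr (by positivity)
    rw [abs_neg, abs_mul, abs_mul, abs_div, abs_div, abs_of_pos hωa, abs_of_pos hωb,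
      abs_of_pos hrapos, abs_of_pos hrbpos'] at h3
    rw [abs_sub_comm (a 0) (xs 0), abs_sub_comm (b 0) (xs 0), mul_div_assoc, mul_div_assoc]
    exact h3
  · -- case (1): xs ≠ ys
    left
    have hne : xs ≠ ys := fun h => hxy (by rw [h])
    have hsub : xs 0 - ys 0 ≠ 0 := sub_ne_zero.mpr hxy
    have hsub' : ys 0 - xs 0 ≠ 0 := sub_ne_zero.mpr (fun h => hxy h.symm)
    -- minimize over x
    have hφmin : ∀ t : ℝ,
        ωa * Real.sqrt ((xs 0 - a 0)^2 + (a 1)^2) + ωH * |xs 0 - ys 0|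
          + ωb * lpNorm 2 (ys - b) ≤
        ωa * Real.sqrt ((t - a 0)^2 + (a 1)^2) + ωH * |t - ys 0|
          + ωb * lpNorm 2 (ys - b) := by
      intro t
      have h := hmin ![t, 0] ys (by simp) hys
      rw [heA, heXY, heTA t, heTY t] at h
      exact h
    have hd : HasDerivAt (fun t => ωa * Real.sqrt ((t - a 0)^2 + (a 1)^2)
          + ωH * |t - ys 0| + ωb * lpNorm 2 (ys - b))
        (ωa * ((xs 0 - a 0) / Real.sqrt ((xs 0 - a 0)^2 + (a 1)^2))
          + ωH * ((xs 0 - ys 0) / |xs 0 - ys 0|)) (xs 0) :=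
      (((hasDerivAt_sqrtdist (a 0) _ (xs 0) hsa).const_mul ωa).add
        ((hasDerivAt_absdist (ys 0) (xs 0) hxy).const_mul ωH)).add_const _
    have hDa := deriv_zero_of_min hφmin hd
    have hkey_a : ωa * |xs 0 - a 0| / Real.sqrt ((xs 0 - a 0)^2 + (a 1)^2) = ωH :=
      abs_key hωa hrapos hsub hωH hDa
    -- minimize over y
    have hψmin : ∀ t : ℝ,
        ωb * Real.sqrt ((ys 0 - b 0)^2 + (b 1)^2) + ωH * |ys 0 - xs 0|
          + ωa * lpNorm 2 (xs - a) ≤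
        ωb * Real.sqrt ((t - b 0)^2 + (b 1)^2) + ωH * |t - xs 0|
          + ωa * lpNorm 2 (xs - a) := by
      intro t
      have h := hmin xs ![t, 0] hxs (by simp)
      rw [heB, heXY, heTB t, heXT t] at h
      rw [abs_sub_comm (xs 0) (ys 0)] at h
      linarith
    have hd2 : HasDerivAt (fun t => ωb * Real.sqrt ((t - b 0)^2 + (b 1)^2)
          + ωH * |t - xs 0| + ωa * lpNorm 2 (xs - a))
        (ωb * ((ys 0 - b 0) / Real.sqrt ((ys 0 - b 0)^2 + (b 1)^2))
          + ωH * ((ys 0 - xs 0) / |ys 0 - xs 0|)) (ys 0) :=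
      (((hasDerivAt_sqrtdist (b 0) _ (ys 0) hsb).const_mul ωb).add
        ((hasDerivAt_absdist (xs 0) (ys 0) (fun h => hxy h.symm)).const_mul ωH)).add_const _
    have hDb := deriv_zero_of_min hψmin hd2
    have hkey_b : ωb * |ys 0 - b 0| / Real.sqrt ((ys 0 - b 0)^2 + (b 1)^2) = ωH :=
      abs_key hωb hrbpos hsub' hωH hDb
    refine ⟨hne, ?_, ?_⟩
    · rw [heA, heB, abs_sub_comm (a 0) (xs 0), abs_sub_comm (b 0) (ys 0), hkey_a, hkey_b]
    · rw [heB, heXY, abs_sub_comm (b 0) (ys 0), hkey_b,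
        mul_div_assoc, div_self (abs_ne_zero.mpr hsub), mul_one]
end
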